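/- arXiv:1502.03379 — 2 statements merged into one kernel-verified Lean document; each statement's English description precedes it below -/
import Mathlib

section
/- In a binary network, if a tree vertex is stable then its two children cannot both be reticulations. (Proposition 1(3)) -/
/-!
Common framework: a binary phylogenetic network is modelled as a directed graph
on an ambient type `V`, given by a vertex set `verts : Set V`, an adjacency
relation `adj : V → V → Prop` (no parallel edges are possible in this model),
and a root vertex `root`.
-/

/-- The outdegree of a vertex `v`: the number of its out-neighbours. -/
noncomputable def outdeg {V : Type*} (adj : V → V → Prop) (v : V) : ℕ :=
  {u | adj v u}.ncard

/-- The indegree of a vertex `v`: the number of its in-neighbours. -/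
noncomputable def indeg {V : Type*} (adj : V → V → Prop) (v : V) : ℕ :=
  {u | adj u v}.ncard

/-- A leaf of the network: a vertex with outdegree 0. -/
def IsLeaf {V : Type*} (verts : Set V) (adj : V → V → Prop) (v : V) : Prop :=
  v ∈ verts ∧ outdeg adj v = 0

/-- A tree vertex: indegree 1 and outdegree 2. -/
def IsTreeVertex {V : Type*} (adj : V → V → Prop) (v : V) : Prop :=
  indeg adj v = 1 ∧ outdeg adj v = 2

/-- A reticulation: indegree 2 and outdegree 1. -/
def IsReticulation {V : Type*} (adj : V → V → Prop) (v : V) : Prop :=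
  indeg adj v = 2 ∧ outdeg adj v = 1

/-- `l` is a directed path from `a` to `b`: a nonempty list of vertices starting
at `a`, ending at `b`, each consecutive pair joined by an edge. -/
def IsPathFromTo {V : Type*} (adj : V → V → Prop) (l : List V) (a b : V) : Prop :=
  l.Chain' adj ∧ l.head? = some a ∧ l.getLast? = some b

/-- A binary phylogenetic network: a finite DAG with a unique root (the only
vertex of indegree 0) of outdegree 2, in which every vertex is reachable from
the root, every leaf has indegree 1, and every other non-root vertex is either
a tree vertex or a reticulation. -/
structure IsBinaryNetwork {V : Type*} (verts : Set V) (adj : V → V → Prop) (root : V) : Prop where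
  finite_verts : verts.Finite
  root_mem : root ∈ verts
  adj_mem : ∀ ⦃u v : V⦄, adj u v → u ∈ verts ∧ v ∈ verts
  acyclic : ∀ v : V, ¬ Relation.TransGen adj v v
  root_indeg : indeg adj root = 0
  root_outdeg : outdeg adj root = 2
  root_unique : ∀ v ∈ verts, indeg adj v = 0 → v = root
  reach : ∀ v ∈ verts, Relation.ReflTransGen adj root v
  leaf_indeg : ∀ v ∈ verts, outdeg adj v = 0 → indeg adj v = 1
  internal_deg : ∀ v ∈ verts, v ≠ root → outdeg adj v ≠ 0 →
      IsTreeVertex adj v ∨ IsReticulation adj v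

/-- `x` is stable: there is a leaf `ℓ` such that `x` lies on every directed
path from the root to `ℓ`. -/
def Stable {V : Type*} (verts : Set V) (adj : V → V → Prop) (root x : V) : Prop :=
  ∃ ℓ, IsLeaf verts adj ℓ ∧ ∀ l : List V, IsPathFromTo adj l root ℓ → x ∈ l

/-- A network is reticulation-visible if every reticulation is stable. -/
def ReticulationVisible {V : Type*} (verts : Set V) (adj : V → V → Prop) (root : V) : Prop :=
  ∀ v ∈ verts, IsReticulation adj v → Stable verts adj root v

/-- A network is nearly stable if every vertex is stable or all of its parents
are stable. -/
def NearlyStable {V : Type*} (verts : Set V) (adj : V → V → Prop) (root : V) : Prop :=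
  ∀ v ∈ verts, Stable verts adj root v ∨ ∀ p : V, adj p v → Stable verts adj root p

section Helpers

variable {V : Type*} {adj : V → V → Prop}

lemma tg_of_chain_mem : ∀ {t : List V} {x y : V}, List.Chain adj x t → y ∈ t →
    Relation.TransGen adj x y := by
  intro t
  induction t with
  | nil => intro x y _ hy; simp at hy
  | cons a t ih =>
    intro x y h hy
    rcases List.chain_cons.mp h with ⟨hxa, hat⟩
    rcases List.mem_cons.mp hy with rfl | hy
    · exact Relation.TransGen.single hxa
    · exact Relation.TransGen.head hxa (ih hat hy)

lemma tg_of_chain'_mem {t : List V} {x y : V} (h : List.Chain' adj (x :: t)) (hy : y ∈ t) :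
    Relation.TransGen adj x y :=
  tg_of_chain_mem h hy

lemma rtg_of_chain : ∀ (l : List V) (a b : V), List.Chain' adj l →
    l.head? = some a → l.getLast? = some b → Relation.ReflTransGen adj a b
  | [], a, b, _, h1, _ => by simp at h1
  | [x], a, b, _, h1, h2 => by
    simp only [List.head?_cons, Option.some.injEq] at h1
    simp only [List.getLast?_singleton, Option.some.injEq] at h2
    subst h1; subst h2; rfl
  | x :: y :: t, a, b, hc, h1, h2 => by
    simp only [List.head?_cons, Option.some.injEq] at h1
    subst h1
    rcases List.isChain_cons_cons.mp hc with ⟨hxy, hc'⟩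
    rw [List.getLast?_cons_cons] at h2
    exact Relation.ReflTransGen.head hxy (rtg_of_chain (y :: t) y b hc' rfl h2)

lemma exists_path {a b : V} (h : Relation.ReflTransGen adj a b) :
    ∃ l : List V, IsPathFromTo adj l a b := by
  induction h with
  | refl => exact ⟨[a], List.isChain_singleton a, rfl, rfl⟩
  | @tail b c _ hbc ih =>
    obtain ⟨l, hch, hh, hl⟩ := ih
    refine ⟨l ++ [c], ?_, ?_, ?_⟩
    · apply List.isChain_append.mpr
      refine ⟨hch, List.isChain_singleton c, ?_⟩
      intro x hx y hy
      rw [hl] at hx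
      simp only [Option.mem_def, Option.some.injEq] at hx
      simp only [List.head?_cons, Option.mem_def, Option.some.injEq] at hy
      subst hx; subst hy; exact hbc
    · rw [List.head?_append_of_ne_nil]
      · exact hh
      · intro h; rw [h] at hh; simp at hh
    · rw [List.getLast?_append_of_ne_nil _ (by simp)]; rfl

lemma path_ne_nil {l : List V} {a b : V} (h : IsPathFromTo adj l a b) : l ≠ [] := by
  intro hn; rw [hn] at h; simp [IsPathFromTo] at h

lemma append_paths {Q T : List V} {r u c ℓ : V} (hQ : IsPathFromTo adj Q r u)
    (huc : adj u c) (hT : IsPathFromTo adj T c ℓ) : IsPathFromTo adj (Q ++ T) r ℓ := by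
  obtain ⟨hQc, hQh, hQl⟩ := hQ
  obtain ⟨hTc, hTh, hTl⟩ := hT
  refine ⟨?_, ?_, ?_⟩
  · apply List.isChain_append.mpr
    refine ⟨hQc, hTc, ?_⟩
    intro x hx y hy
    rw [hQl] at hx; rw [hTh] at hy
    simp only [Option.mem_def, Option.some.injEq] at hx hy
    subst hx; subst hy; exact huc
  · rw [List.head?_append_of_ne_nil _ (path_ne_nil ⟨hQc, hQh, hQl⟩)]; exact hQh
  · rw [List.getLast?_append_of_ne_nil _ (path_ne_nil ⟨hTc, hTh, hTl⟩)]; exact hTl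

end Helpers

/-- In a binary network, if a tree vertex is stable then its two children
cannot both be reticulations. (Proposition 1(3)) -/
theorem not_both_children_reticulations {V : Type*} (verts : Set V)
    (adj : V → V → Prop) (root : V) (hN : IsBinaryNetwork verts adj root)
    (v c₁ c₂ : V) (hv : IsTreeVertex adj v) (hstable : Stable verts adj root v)
    (h₁ : adj v c₁) (h₂ : adj v c₂) (hne : c₁ ≠ c₂) :
    ¬ (IsReticulation adj c₁ ∧ IsReticulation adj c₂) := by
  rintro ⟨hr₁, hr₂⟩
  obtain ⟨ℓ, hℓ, hall⟩ := hstable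
  have hout : {u | adj v u}.ncard = 2 := hv.2
  have hchild : ∀ u, adj v u → u = c₁ ∨ u = c₂ := by
    have hfin : {u | adj v u}.Finite :=
      Set.finite_of_ncard_ne_zero (by rw [hout]; norm_num)
    have hsub : ({c₁, c₂} : Set V) ⊆ {u | adj v u} := by
      rintro x (rfl | rfl)
      · exact h₁
      · exact h₂
    have heq : ({c₁, c₂} : Set V) = {u | adj v u} :=
      Set.eq_of_subset_of_ncard_le hsub (by rw [hout, Set.ncard_pair hne]) hfin
    intro u hu
    have : u ∈ ({c₁, c₂} : Set V) := heq ▸ hu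
    simpa using this
  have hpar : ∀ c, IsReticulation adj c → ∃ u, adj u c ∧ u ≠ v := by
    intro c hc
    by_contra hcon
    push_neg at hcon
    have hsub : {u | adj u c} ⊆ {v} := fun u hu => hcon u hu
    have hle := Set.ncard_le_ncard hsub (Set.finite_singleton v)
    have hc2 : {u | adj u c}.ncard = 2 := hc.1
    rw [hc2, Set.ncard_singleton] at hle
    omega
  obtain ⟨u₁, hu₁, hu₁v⟩ := hpar c₁ hr₁
  obtain ⟨u₂, hu₂, hu₂v⟩ := hpar c₂ hr₂
  -- key step lemma
  have step : ∀ c d u : V, (∀ w, adj v w → w = c ∨ w = d) → adj u c → u ≠ v →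
      ∀ T, IsPathFromTo adj T c ℓ → v ∉ T →
      Relation.TransGen adj d c ∧ ∃ T', IsPathFromTo adj T' d ℓ ∧ v ∉ T' := by
    intro c d u hch huc huv T hT hvT
    obtain ⟨Q, hQ⟩ := exists_path (hN.reach u (hN.adj_mem huc).1)
    have hQT : IsPathFromTo adj (Q ++ T) root ℓ := append_paths hQ huc hT
    have hvQ : v ∈ Q := by
      rcases List.mem_append.mp (hall _ hQT) with h | h
      · exact h
      · exact absurd h hvT
    obtain ⟨Q₁, Q₂, hQeq⟩ := List.append_of_mem hvQ
    subst hQeq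
    have hQlast : (v :: Q₂).getLast? = some u := by
      rw [← List.getLast?_append_cons Q₁ v Q₂]; exact hQ.2.2
    cases Q₂ with
    | nil =>
      simp only [List.getLast?_singleton, Option.some.injEq] at hQlast
      exact absurd hQlast.symm huv
    | cons w Q₂' =>
      have hcvw : List.Chain' adj (v :: w :: Q₂') := hQ.1.suffix ⟨Q₁, rfl⟩
      obtain ⟨hvw, hcw⟩ := List.isChain_cons_cons.mp hcvw
      have hwlast : (w :: Q₂').getLast? = some u := by
        rw [← List.getLast?_cons_cons]; exact hQlast
      have hrtg : Relation.ReflTransGen adj w u := rtg_of_chain _ w u hcw rfl hwlast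
      rcases hch w hvw with rfl | rfl
      · exact absurd (Relation.TransGen.tail' hrtg huc) (hN.acyclic w)
      · refine ⟨Relation.TransGen.tail' hrtg huc, w :: (Q₂' ++ T), ⟨?_, rfl, ?_⟩, ?_⟩
        · exact hQT.1.suffix ⟨Q₁ ++ [v], by simp⟩
        · rw [show w :: (Q₂' ++ T) = (w :: Q₂') ++ T from rfl,
            List.getLast?_append_of_ne_nil _ (path_ne_nil hT)]
          exact hT.2.2
        · intro hvm
          rcases List.mem_cons.mp hvm with rfl | hvm'
          · exact hN.acyclic v (Relation.TransGen.single hvw)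
          · rcases List.mem_append.mp hvm' with h | h
            · exact hN.acyclic v (tg_of_chain'_mem hcvw (List.mem_cons_of_mem w h))
            · exact hvT h
  -- initial path from root to ℓ
  obtain ⟨P, hP⟩ := exists_path (hN.reach ℓ hℓ.1)
  obtain ⟨A, B, hPeq⟩ := List.append_of_mem (hall P hP)
  subst hPeq
  have hPlast : (v :: B).getLast? = some ℓ := by
    rw [← List.getLast?_append_cons A v B]; exact hP.2.2
  cases B with
  | nil =>
    simp only [List.getLast?_singleton, Option.some.injEq] at hPlast
    have := hℓ.2
    rw [← hPlast] at this
    rw [hv.2] at this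
    omega
  | cons w B' =>
    have hcvw : List.Chain' adj (v :: w :: B') := hP.1.suffix ⟨A, rfl⟩
    obtain ⟨hvw, hcw⟩ := List.isChain_cons_cons.mp hcvw
    have hB : IsPathFromTo adj (w :: B') w ℓ := by
      refine ⟨hcw, rfl, ?_⟩
      rw [← List.getLast?_cons_cons]; exact hPlast
    have hvB : v ∉ w :: B' := fun h => hN.acyclic v (tg_of_chain'_mem hcvw h)
    rcases hchild w hvw with rfl | rfl
    · obtain ⟨htg1, T₂, hT₂, hvT₂⟩ := step w c₂ u₁ hchild hu₁ hu₁v _ hB hvB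
      obtain ⟨htg2, -⟩ := step c₂ w u₂ (fun x hx => (hchild x hx).symm) hu₂ hu₂v _ hT₂ hvT₂
      exact hN.acyclic c₂ (htg1.trans htg2)
    · obtain ⟨htg1, T₂, hT₂, hvT₂⟩ := step w c₁ u₂ (fun x hx => (hchild x hx).symm) hu₂ hu₂v _ hB hvB
      obtain ⟨htg2, -⟩ := step c₁ w u₁ hchild hu₁ hu₁v _ hT₂ hvT₂
      exact hN.acyclic c₁ (htg1.trans htg2)
end

section
/- In a binary reticulation-visible network, no parent of a reticulation is itself a reticulation; equivalently, every parent of a reticulation is the root or a tree vertex. -/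
section PathHelpers
variable {V : Type*} {adj : V → V → Prop}

lemma path_append {l1 l2 : List V} {a b c d : V}
    (h1 : IsPathFromTo adj l1 a b) (h2 : IsPathFromTo adj l2 c d) (hbc : adj b c) :
    IsPathFromTo adj (l1 ++ l2) a d := by
  obtain ⟨c1, h1h, h1l⟩ := h1
  obtain ⟨c2, h2h, h2l⟩ := h2
  refine ⟨List.IsChain.append c1 c2 ?_, ?_, ?_⟩
  · intro x hx y hy
    rw [h1l] at hx; rw [h2h] at hy
    simp_all
  · rw [List.head?_append, h1h]; rfl
  · rw [List.getLast?_append, h2l]; rfl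

lemma pathOf {a b : V} (h : Relation.ReflTransGen adj a b) :
    ∃ l, IsPathFromTo adj l a b := by
  induction h with
  | refl => exact ⟨[a], ⟨List.isChain_singleton _, rfl, rfl⟩⟩
  | @tail b c h hbc ih =>
    obtain ⟨l, hl⟩ := ih
    exact ⟨l ++ [c], path_append hl (⟨List.isChain_singleton _, rfl, rfl⟩) hbc⟩

lemma path_cons_tail {c e : V} {t : List V} {b : V}
    (h : IsPathFromTo adj (c :: e :: t) c b) : IsPathFromTo adj (e :: t) e b := by
  obtain ⟨hc, _, hl⟩ := h
  exact ⟨(List.isChain_cons_cons.mp hc).2, rfl, by simpa using hl⟩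

lemma path_rtg : ∀ {l : List V} {a b : V}, IsPathFromTo adj l a b →
    Relation.ReflTransGen adj a b := by
  intro l
  induction l with
  | nil => intro a b h; simp [IsPathFromTo] at h
  | cons c t ih =>
    intro a b h
    obtain ⟨hc, hh, hl⟩ := h
    simp at hh; subst hh
    cases t with
    | nil => simp at hl; subst hl; exact .refl
    | cons e t' =>
      exact Relation.ReflTransGen.head (List.isChain_cons_cons.mp hc).1
        (ih (path_cons_tail ⟨hc, rfl, hl⟩))

lemma mem_path : ∀ {l : List V} {a b x : V}, IsPathFromTo adj l a b → x ∈ l →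
    Relation.ReflTransGen adj a x ∧ Relation.ReflTransGen adj x b := by
  intro l
  induction l with
  | nil => intro a b x h hx; simp at hx
  | cons c t ih =>
    intro a b x h hx
    obtain ⟨hc, hh, hl⟩ := h
    simp at hh; subst hh
    rcases List.mem_cons.mp hx with rfl | hxt
    · exact ⟨.refl, path_rtg ⟨hc, rfl, hl⟩⟩
    · cases t with
      | nil => simp at hxt
      | cons e t' =>
        obtain ⟨h1, h2⟩ := ih (path_cons_tail ⟨hc, rfl, hl⟩) hxt
        exact ⟨Relation.ReflTransGen.head (List.isChain_cons_cons.mp hc).1 h1, h2⟩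

end PathHelpers

/-- In a binary reticulation-visible network, no parent of a reticulation is
itself a reticulation; equivalently, every parent of a reticulation is the
root or a tree vertex. -/
theorem parent_of_reticulation_not_reticulation {V : Type*} (verts : Set V)
    (adj : V → V → Prop) (root : V) (hN : IsBinaryNetwork verts adj root)
    (hRV : ReticulationVisible verts adj root)
    (p r : V) (hpr : adj p r) (hr : IsReticulation adj r) :
    ¬ IsReticulation adj p ∧ (p = root ∨ IsTreeVertex adj p) := by
  have hpv : p ∈ verts := (hN.adj_mem hpr).1
  have key : ¬ IsReticulation adj p := by
    intro hp
    -- the unique child of p is r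
    obtain ⟨a, ha⟩ := Set.ncard_eq_one.mp hp.2
    have hchild : ∀ u, adj p u → u = r := by
      intro u hu
      have h1 : u ∈ {u | adj p u} := hu
      have h2 : r ∈ {u | adj p u} := hpr
      rw [ha] at h1 h2
      simp only [Set.mem_singleton_iff] at h1 h2
      rw [h1, h2]
    -- a second parent q of r
    obtain ⟨x, y, hxy, hs⟩ := Set.ncard_eq_two.mp hr.1
    have hpmem : p ∈ ({x, y} : Set V) := by rw [← hs]; exact hpr
    have hxr : adj x r := by have : x ∈ {u | adj u r} := by rw [hs]; simp
                             exact this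
    have hyr : adj y r := by have : y ∈ {u | adj u r} := by rw [hs]; simp
                             exact this
    obtain ⟨q, hq, hqp⟩ : ∃ q, adj q r ∧ q ≠ p := by
      rcases hpmem with rfl | rfl
      · exact ⟨y, hyr, fun h => hxy h.symm⟩
      · exact ⟨x, hxr, hxy⟩
    -- p is stable
    obtain ⟨ℓ, hℓ, hstab⟩ := hRV p hpv hp
    obtain ⟨l0, hl0⟩ := pathOf (hN.reach ℓ hℓ.1)
    have hpl : Relation.ReflTransGen adj p ℓ := (mem_path hl0 (hstab l0 hl0)).2
    have hpne : p ≠ ℓ := by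
      intro h
      have := hp.2
      rw [h, hℓ.2] at this
      exact one_ne_zero this.symm
    have hrl : Relation.ReflTransGen adj r ℓ := by
      rcases hpl.cases_head with h | ⟨c, hc, hcl⟩
      · exact absurd h hpne
      · rwa [hchild c hc] at hcl
    obtain ⟨l2, hl2⟩ := pathOf hrl
    obtain ⟨l1, hl1⟩ := pathOf (hN.reach q (hN.adj_mem hq).1)
    have hmem := hstab (l1 ++ l2) (path_append hl1 hl2 hq)
    rcases List.mem_append.mp hmem with h1 | h2
    · have hpq : Relation.ReflTransGen adj p q := (mem_path hl1 h1).2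
      rcases hpq.cases_head with h | ⟨c, hc, hcq⟩
      · exact hqp h.symm
      · rw [hchild c hc] at hcq
        exact hN.acyclic r (Relation.TransGen.tail' hcq hq)
    · have hrp : Relation.ReflTransGen adj r p := (mem_path hl2 h2).1
      exact hN.acyclic r (Relation.TransGen.tail' hrp hpr)
  refine ⟨key, ?_⟩
  by_cases hproot : p = root
  · exact Or.inl hproot
  · right
    have hout : outdeg adj p ≠ 0 := by
      intro h
      have fin : {u | adj p u}.Finite :=
        hN.finite_verts.subset (fun u hu => (hN.adj_mem hu).2)
      have hempty := (Set.ncard_eq_zero fin).mp h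
      have : r ∈ {u | adj p u} := hpr
      rw [hempty] at this
      exact this
    rcases hN.internal_deg p hpv hproot hout with ht | hret
    · exact ht
    · exact absurd hret key
end
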